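/- Fix integers L ≥ 2 and 1 ≤ M ≤ L/2, a real δ > 0, and reals G_+ > 0, G_- > 0 with G_+ - G_- = 2δ or G_+ - G_- = -2δ. Let H be the pair-sector Hamiltonian matrix defined in the context. Then for every M-element subset T of S = {δ(k - L/2) : k = 1, ..., L-1} such that |v - w| > δ for all distinct v, w ∈ T, the number E = 2∑_{v ∈ T} v is an eigenvalue of H. -/

import Mathlib

open Finset Matrix
namespace BCSAux
variable {α : Type*} [DecidableEq α]

lemma mv_notmem_j {A A' : Finset α} {j k : α} (hj : j ∈ A) (hk : k ∉ A)
    (h : A' = insert k (A.erase j)) : j ∉ A' := by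
  subst h
  simp only [mem_insert, mem_erase]
  rintro (rfl | ⟨hne, _⟩)
  · exact hk hj
  · exact hne rfl

lemma mv_mem_k {A A' : Finset α} {k j : α} (hk : k ∉ A)
    (h : A' = insert k (A.erase j)) : k ∈ A' := by
  subst h; exact mem_insert_self _ _

lemma mv_symm {A A' : Finset α} {j k : α} (hj : j ∈ A) (hk : k ∉ A)
    (h : A' = insert k (A.erase j)) : A = insert j (A'.erase k) := by
  subst h
  ext a
  simp only [mem_insert, mem_erase]
  constructor
  · intro ha
    by_cases haj : a = j
    · exact Or.inl haj
    · exact Or.inr ⟨fun e => hk (e ▸ ha), Or.inr ⟨haj, ha⟩⟩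
  · rintro (rfl | ⟨hak, (rfl | ⟨_, ha⟩)⟩)
    · exact hj
    · exact absurd rfl hak
    · exact ha

lemma mv_mem_iff {A A' : Finset α} {j k : α} (h : A' = insert k (A.erase j))
    {a : α} (haj : a ≠ j) (hak : a ≠ k) : a ∈ A' ↔ a ∈ A := by
  subst h; simp [haj, hak]

lemma mv_unique_j {A A' : Finset α} {j k : α} (hj : j ∈ A) (hk : k ∉ A)
    (h : A' = insert k (A.erase j)) {a : α} (ha : a ∈ A) (ha' : a ∉ A') : a = j := by
  by_contra haj
  exact ha' ((mv_mem_iff h haj (fun e => hk (e ▸ ha))).mpr ha)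

lemma mv_unique_k {A A' : Finset α} {j k : α} (hj : j ∈ A) (hk : k ∉ A)
    (h : A' = insert k (A.erase j)) {a : α} (ha : a ∈ A') (ha' : a ∉ A) : a = k := by
  by_contra hak
  exact ha' ((mv_mem_iff h (fun e => ha' (by rw [e]; exact hj)) hak).mp ha)

lemma mv_card {A A' : Finset α} {j k : α} (hj : j ∈ A) (hk : k ∉ A)
    (h : A' = insert k (A.erase j)) : A'.card = A.card := by
  subst h
  rw [card_insert_of_notMem (fun hkk => hk (mem_of_mem_erase hkk)),
    card_erase_of_mem hj]
  exact Nat.succ_pred_eq_of_pos (card_pos.mpr ⟨j, hj⟩)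

lemma eig_of_transpose {n : Type*} [Fintype n] [DecidableEq n]
    (M : Matrix n n ℂ) (e : ℂ)
    (h : ∃ y, y ≠ 0 ∧ (Mᵀ).mulVec y = e • y) :
    ∃ x, x ≠ 0 ∧ M.mulVec x = e • x := by
  obtain ⟨y, hy0, hy⟩ := h
  have hdetT : (Mᵀ - e • 1).det = 0 := by
    rw [← Matrix.exists_mulVec_eq_zero_iff]
    exact ⟨y, hy0, by
      rw [Matrix.sub_mulVec, hy, Matrix.smul_mulVec, Matrix.one_mulVec, sub_self]⟩
  have hdet : (M - e • 1).det = 0 := by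
    have h2 : (M - e • 1)ᵀ = Mᵀ - e • 1 := by
      rw [Matrix.transpose_sub, Matrix.transpose_smul, Matrix.transpose_one]
    rw [← Matrix.det_transpose, h2, hdetT]
  obtain ⟨x, hx0, hx⟩ := (Matrix.exists_mulVec_eq_zero_iff).mpr hdet
  refine ⟨x, hx0, ?_⟩
  rw [Matrix.sub_mulVec, Matrix.smul_mulVec, Matrix.one_mulVec, sub_eq_zero] at hx
  exact hx


lemma mem_flip_iff {S : Finset α} {e e' a : α} (hae : a ≠ e) (hae' : a ≠ e') :
    a ∈ insert e' (S.erase e) ↔ a ∈ S := by simp [hae, hae']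

section defs
def psi (L : ℕ) (hL : 0 < L) (n : ℕ) : Fin L := ⟨n % L, Nat.mod_lt n hL⟩

lemma psi_val {L : ℕ} (hL : 0 < L) {n : ℕ} (h : n < L) : ((psi L hL n : Fin L) : ℕ) = n :=
  Nat.mod_eq_of_lt h

lemma psi_ne {L : ℕ} (hL : 0 < L) {m n : ℕ} (hm : m < L) (hn : n < L) (h : m ≠ n) :
    psi L hL m ≠ psi L hL n := by
  intro e
  exact h (by rw [← psi_val hL hm, ← psi_val hL hn, e])

def chi (L : ℕ) (hL : 0 < L) (b : ℕ) (A : Finset (Fin L)) : ℝ :=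
  if psi L hL b ∈ A then (if psi L hL (b+1) ∈ A then 0 else 1)
  else (if psi L hL (b+1) ∈ A then -1 else 0)

def xv (L : ℕ) (hL : 0 < L) (B : Finset ℕ) (A : Finset (Fin L)) : ℝ :=
  ∏ b ∈ B, chi L hL b A
end defs

variable {L : ℕ} {hL : 0 < L} {B : Finset ℕ}

lemma chi_flip {b : ℕ} (hb1 : b + 1 < L) {A : Finset (Fin L)} {e e' : Fin L}
    (hee : (e = psi L hL b ∧ e' = psi L hL (b+1)) ∨ (e = psi L hL (b+1) ∧ e' = psi L hL b))
    (he : e ∈ A) (he' : e' ∉ A) :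
    chi L hL b (insert e' (A.erase e)) = - chi L hL b A := by
  have hne : e ≠ e' := by
    rcases hee with ⟨rfl, rfl⟩ | ⟨rfl, rfl⟩
    · exact psi_ne hL (by omega) hb1 (by omega)
    · exact psi_ne hL hb1 (by omega) (by omega)
  have hm1 : e ∉ insert e' (A.erase e) := by simp [hne, Finset.mem_erase]
  have hm2 : e' ∈ insert e' (A.erase e) := mem_insert_self _ _
  rcases hee with ⟨rfl, rfl⟩ | ⟨rfl, rfl⟩
  · simp [chi, he, he', hm1, hm2]
  · simp [chi, he, he', hm1, hm2]

lemma xv_flip (hB1 : ∀ b ∈ B, b + 1 < L)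
    (hgap : ∀ b ∈ B, ∀ c ∈ B, b ≠ c → b + 2 ≤ c ∨ c + 2 ≤ b)
    {b : ℕ} (hb : b ∈ B) {A : Finset (Fin L)} {e e' : Fin L}
    (hee : (e = psi L hL b ∧ e' = psi L hL (b+1)) ∨ (e = psi L hL (b+1) ∧ e' = psi L hL b))
    (he : e ∈ A) (he' : e' ∉ A) :
    xv L hL B (insert e' (A.erase e)) = - xv L hL B A := by
  unfold xv
  rw [← Finset.mul_prod_erase B (fun c => chi L hL c (insert e' (A.erase e))) hb,
    ← Finset.mul_prod_erase B (fun c => chi L hL c A) hb]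
  have h2 : ∀ c ∈ B.erase b, chi L hL c (insert e' (A.erase e)) = chi L hL c A := by
    intro c hc
    have hcB := mem_of_mem_erase hc
    have hcb : c ≠ b := ne_of_mem_erase hc
    have hgbc := hgap c hcB b hb hcb
    have hc1 : c + 1 < L := hB1 c hcB
    have hb1 : b + 1 < L := hB1 b hb
    have key : ∀ a : Fin L, ((a : ℕ) = c ∨ (a : ℕ) = c + 1) →
        (a ∈ insert e' (A.erase e) ↔ a ∈ A) := by
      intro a ha
      have hev : ((e : ℕ) = b ∨ (e : ℕ) = b + 1) ∧ ((e' : ℕ) = b ∨ (e' : ℕ) = b + 1) := by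
        rcases hee with ⟨rfl, rfl⟩ | ⟨rfl, rfl⟩ <;>
          simp [psi_val hL (by omega : b < L), psi_val hL hb1]
      refine mem_flip_iff (fun h => ?_) (fun h => ?_)
      · have hval : (a : ℕ) = (e : ℕ) := by rw [h]
        rcases hev.1 with h1 | h1 <;> rcases ha with h2 | h2 <;> omega
      · have hval : (a : ℕ) = (e' : ℕ) := by rw [h]
        rcases hev.2 with h1 | h1 <;> rcases ha with h2 | h2 <;> omega
    have k1 := key (psi L hL c) (Or.inl (psi_val hL (by omega)))
    have k2 := key (psi L hL (c+1)) (Or.inr (psi_val hL hc1))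
    simp only [chi, k1, k2]
  rw [Finset.prod_congr rfl h2, chi_flip (hB1 b hb) hee he he']
  ring

lemma chi_ne_zero {A : Finset (Fin L)} (hx : xv L hL B A ≠ 0) {b : ℕ} (hb : b ∈ B) :
    chi L hL b A ≠ 0 := by
  intro h
  exact hx (Finset.prod_eq_zero hb h)

lemma chi_cases {A : Finset (Fin L)} {b : ℕ} (h : chi L hL b A ≠ 0) :
    (psi L hL b ∈ A ∧ psi L hL (b+1) ∉ A) ∨ (psi L hL (b+1) ∈ A ∧ psi L hL b ∉ A) := by
  unfold chi at h
  split_ifs at h with h1 h2 h3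
  · exact absurd rfl h
  · exact Or.inl ⟨h1, h2⟩
  · exact Or.inr ⟨h3, h1⟩
  · exact absurd rfl h

/-- structure of the support: every element of a support configuration lies in one
of the blocks. -/
lemma supp_elts (hB1 : ∀ b ∈ B, b + 1 < L)
    (hgap : ∀ b ∈ B, ∀ c ∈ B, b ≠ c → b + 2 ≤ c ∨ c + 2 ≤ b)
    {A : Finset (Fin L)} (hcard : A.card = B.card) (hx : xv L hL B A ≠ 0) :
    ∀ a ∈ A, ∃ b ∈ B, a = psi L hL b ∨ a = psi L hL (b+1) := by
  classical
  set sel : ℕ → Fin L := fun b => if psi L hL b ∈ A then psi L hL b else psi L hL (b+1)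
    with hsel
  have hmem : ∀ b ∈ B, sel b ∈ A := by
    intro b hb
    rcases chi_cases (chi_ne_zero hx hb) with ⟨h1, h2⟩ | ⟨h1, h2⟩
    · simp [hsel, h1]
    · simp [hsel, h2, h1]
  have hvals : ∀ b ∈ B, ((sel b : ℕ) = b ∨ (sel b : ℕ) = b + 1) := by
    intro b hb
    have hb1 := hB1 b hb
    by_cases h : psi L hL b ∈ A
    · simp [hsel, h, psi_val hL (by omega : b < L)]
    · simp [hsel, h, psi_val hL hb1]
  have hinj : Set.InjOn sel B := by
    intro b hb c hc h
    by_contra hbc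
    have h1 := hvals b hb
    have h2 := hvals c hc
    have := hgap b hb c hc hbc
    have : (sel b : ℕ) = (sel c : ℕ) := by rw [h]
    omega
  have himg : B.image sel = A := by
    apply Finset.eq_of_subset_of_card_le
    · intro a ha
      rcases Finset.mem_image.mp ha with ⟨b, hb, rfl⟩
      exact hmem b hb
    · rw [Finset.card_image_of_injOn hinj, hcard]
  intro a ha
  rw [← himg] at ha
  rcases Finset.mem_image.mp ha with ⟨b, hb, rfl⟩
  refine ⟨b, hb, ?_⟩
  by_cases h : psi L hL b ∈ A
  · simp [hsel, h]
  · simp [hsel, h]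


section flip
def flipset (L : ℕ) (hL : 0 < L) (b : ℕ) (S : Finset (Fin L)) : Finset (Fin L) :=
  if psi L hL b ∈ S then
    (if psi L hL (b+1) ∈ S then S else insert (psi L hL (b+1)) (S.erase (psi L hL b)))
  else
    (if psi L hL (b+1) ∈ S then insert (psi L hL b) (S.erase (psi L hL (b+1))) else S)

variable {L : ℕ} {hL : 0 < L} {b : ℕ} {S : Finset (Fin L)}

lemma flipset_pos (h1 : psi L hL b ∈ S) (h2 : psi L hL (b+1) ∉ S) :
    flipset L hL b S = insert (psi L hL (b+1)) (S.erase (psi L hL b)) := by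
  simp [flipset, h1, h2]

lemma flipset_neg (h1 : psi L hL (b+1) ∈ S) (h2 : psi L hL b ∉ S) :
    flipset L hL b S = insert (psi L hL b) (S.erase (psi L hL (b+1))) := by
  simp [flipset, h1, h2]

lemma flipset_id (h : psi L hL b ∈ S ↔ psi L hL (b+1) ∈ S) :
    flipset L hL b S = S := by
  by_cases h1 : psi L hL b ∈ S
  · simp [flipset, h1, h.mp h1]
  · have h2 : psi L hL (b+1) ∉ S := fun hh => h1 (h.mpr hh)
    simp [flipset, h1, h2]

lemma flipset_card : (flipset L hL b S).card = S.card := by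
  unfold flipset
  split_ifs with h1 h2 h3
  · rfl
  · exact mv_card h1 h2 rfl
  · exact mv_card h3 h1 rfl
  · rfl

lemma flipset_invol (hb1 : b + 1 < L) : flipset L hL b (flipset L hL b S) = S := by
  have hne : psi L hL b ≠ psi L hL (b+1) := psi_ne hL (by omega) hb1 (by omega)
  by_cases h1 : psi L hL b ∈ S <;> by_cases h2 : psi L hL (b+1) ∈ S
  · rw [flipset_id (iff_of_true h1 h2), flipset_id (iff_of_true h1 h2)]
  · rw [flipset_pos h1 h2]
    rw [flipset_neg (mem_insert_self _ _)
      (by simp [hne, Finset.mem_erase])]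
    rw [Finset.erase_insert (fun hh => h2 (Finset.mem_of_mem_erase hh)),
      Finset.insert_erase h1]
  · rw [flipset_neg h2 h1]
    rw [flipset_pos (mem_insert_self _ _)
      (by simp [hne.symm, Finset.mem_erase])]
    rw [Finset.erase_insert (fun hh => h1 (Finset.mem_of_mem_erase hh)),
      Finset.insert_erase h2]
  · rw [flipset_id (iff_of_false h1 h2), flipset_id (iff_of_false h1 h2)]
end flip

lemma core (L M : ℕ) (hL0 : 0 < L) (δ : ℝ) (Gp Gm : ℝ)
    (hcrit : Gp - Gm = -(2 * δ))
    (ε : Fin L → ℝ) (hε : ∀ j, ε j = (((j : ℕ) : ℝ) + 1 - ((L : ℝ) + 1) / 2) * δ)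
    (G : Fin L → Fin L → ℝ)
    (hG : ∀ j k, G j k = if j < k then Gp else if k < j then Gm else (Gp + Gm) / 2)
    (H : Matrix {A : Finset (Fin L) // A.card = M} {A : Finset (Fin L) // A.card = M} ℂ)
    (hdiag : ∀ A, H A A = ((2 * ∑ j ∈ A.1, ε j - M * (Gp + Gm) / 2 : ℝ) : ℂ))
    (hoff : ∀ A A' (j k : Fin L), j ∈ A.1 → k ∉ A.1 → A'.1 = insert k (A.1.erase j) →
      H A' A = ((-(G j k) : ℝ) : ℂ))
    (hzero : ∀ A A', A' ≠ A →
      (¬ ∃ j k, j ∈ A.1 ∧ k ∉ A.1 ∧ A'.1 = insert k (A.1.erase j)) → H A' A = 0)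
    (B : Finset ℕ) (hBcard : B.card = M) (hB1 : ∀ b ∈ B, b + 1 < L)
    (hgap : ∀ b ∈ B, ∀ c ∈ B, b ≠ c → b + 2 ≤ c ∨ c + 2 ≤ b) :
    ∃ x : {A : Finset (Fin L) // A.card = M} → ℂ, x ≠ 0 ∧
      H.mulVec x = ((∑ b ∈ B, ((2 * (b : ℝ) + 2 - (L : ℝ)) * δ) : ℝ) : ℂ) • x := by
  classical
  set E : ℝ := ∑ b ∈ B, ((2 * (b : ℝ) + 2 - (L : ℝ)) * δ) with hE
  set X : {A : Finset (Fin L) // A.card = M} → ℂ :=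
    fun A => ((xv L hL0 B A.1 : ℝ) : ℂ) with hXdef
  have psivb : ∀ b ∈ B, ((psi L hL0 b : Fin L) : ℕ) = b := by
    intro b hb; exact psi_val hL0 (by have := hB1 b hb; omega)
  have psivb1 : ∀ b ∈ B, ((psi L hL0 (b+1) : Fin L) : ℕ) = b + 1 := by
    intro b hb; exact psi_val hL0 (hB1 b hb)
  refine ⟨X, ?_, ?_⟩
  · -- nonzero
    have hinj : Set.InjOn (psi L hL0) B := by
      intro a ha b hb h
      have h2 : ((psi L hL0 a : Fin L) : ℕ) = ((psi L hL0 b : Fin L) : ℕ) := by rw [h]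
      rw [psivb a ha, psivb b hb] at h2
      exact h2
    set A₀ : {A : Finset (Fin L) // A.card = M} :=
      ⟨B.image (psi L hL0), by rw [Finset.card_image_of_injOn hinj, hBcard]⟩ with hA₀
    have hx0 : xv L hL0 B A₀.1 = 1 := by
      unfold xv
      apply Finset.prod_eq_one
      intro b hb
      have hmem : psi L hL0 b ∈ A₀.1 := Finset.mem_image_of_mem _ hb
      have hnot : psi L hL0 (b+1) ∉ A₀.1 := by
        intro hmem2
        rcases Finset.mem_image.mp hmem2 with ⟨c, hc, hcb⟩
        have hcv : ((psi L hL0 c : Fin L) : ℕ) = ((psi L hL0 (b+1) : Fin L) : ℕ) := by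
          rw [hcb]
        rw [psivb c hc, psivb1 b hb] at hcv
        rcases hgap c hc b hb (by omega) with h | h <;> omega
      simp [chi, hmem, hnot]
    intro hz
    have hc := congrFun hz A₀
    rw [hXdef] at hc
    simp only [hx0] at hc
    exact one_ne_zero (by exact_mod_cast hc)
  · funext A'
    rw [Matrix.mulVec, Pi.smul_apply, smul_eq_mul]
    show ∑ A, H A' A * X A = (E : ℂ) * X A'
    by_cases hcase : ∀ b ∈ B, psi L hL0 b ∈ A'.1 ∨ psi L hL0 (b+1) ∈ A'.1
    · -- Case 1 : A' in the support
      set sel : ℕ → Fin L :=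
        fun b => if psi L hL0 b ∈ A'.1 then psi L hL0 b else psi L hL0 (b+1) with hseldef
      have hmem : ∀ b ∈ B, sel b ∈ A'.1 := by
        intro b hb
        by_cases h : psi L hL0 b ∈ A'.1
        · simp [hseldef, h]
        · rcases hcase b hb with h1 | h1
          · exact absurd h1 h
          · simp [hseldef, h, h1]
      have hvals : ∀ b ∈ B, ((sel b : ℕ) = b ∨ (sel b : ℕ) = b + 1) := by
        intro b hb
        by_cases h : psi L hL0 b ∈ A'.1
        · simp [hseldef, h, psivb b hb]
        · simp [hseldef, h, psivb1 b hb]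
      have hinj : Set.InjOn sel B := by
        intro a ha b hb h
        by_contra hab
        have h1 := hvals a ha
        have h2 := hvals b hb
        have h3 : (sel a : ℕ) = (sel b : ℕ) := by rw [h]
        rcases hgap a ha b hb hab with h4 | h4 <;> omega
      have himg : B.image sel = A'.1 := by
        apply Finset.eq_of_subset_of_card_le
        · intro a ha
          rcases Finset.mem_image.mp ha with ⟨b, hb, rfl⟩
          exact hmem b hb
        · rw [Finset.card_image_of_injOn hinj, hBcard, A'.2]
      have hxone : ∀ b ∈ B, (psi L hL0 b ∈ A'.1 ∧ psi L hL0 (b+1) ∉ A'.1) ∨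
          (psi L hL0 (b+1) ∈ A'.1 ∧ psi L hL0 b ∉ A'.1) := by
        intro b hb
        have hnotboth : ¬ (psi L hL0 b ∈ A'.1 ∧ psi L hL0 (b+1) ∈ A'.1) := by
          rintro ⟨h1, h2⟩
          rw [← himg] at h2
          rcases Finset.mem_image.mp h2 with ⟨c, hc, hcv⟩
          have h3 : (sel c : ℕ) = b + 1 := by rw [hcv]; exact psivb1 b hb
          have h4 := hvals c hc
          by_cases hcb : c = b
          · subst hcb
            have h5 : sel c = psi L hL0 c := by simp [hseldef, h1]
            rw [h5, psivb c hc] at h3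
            omega
          · rcases hgap c hc b hb hcb with h5 | h5 <;> omega
        rcases hcase b hb with h1 | h1
        · left; exact ⟨h1, fun h2 => hnotboth ⟨h1, h2⟩⟩
        · by_cases h0 : psi L hL0 b ∈ A'.1
          · left; exact ⟨h0, fun h2 => hnotboth ⟨h0, h2⟩⟩
          · right; exact ⟨h1, h0⟩
      set F : ℕ → {A : Finset (Fin L) // A.card = M} :=
        fun b => ⟨flipset L hL0 b A'.1, by rw [flipset_card]; exact A'.2⟩ with hFdef
      have hFb : ∀ b ∈ B, (psi L hL0 b ∈ A'.1 →
          (F b).1 = insert (psi L hL0 (b+1)) (A'.1.erase (psi L hL0 b))) ∧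
          (psi L hL0 b ∉ A'.1 →
          (F b).1 = insert (psi L hL0 b) (A'.1.erase (psi L hL0 (b+1)))) := by
        intro b hb
        rcases hxone b hb with ⟨h1, h2⟩ | ⟨h1, h2⟩
        · exact ⟨fun _ => flipset_pos h1 h2, fun h => absurd h1 h⟩
        · exact ⟨fun h => absurd h h2, fun _ => flipset_neg h1 h2⟩
      have hFnew : ∀ b ∈ B, ∃ e : Fin L, e ∈ (F b).1 ∧ e ∉ A'.1 ∧
          ((e : ℕ) = b ∨ (e : ℕ) = b + 1) := by
        intro b hb
        rcases hxone b hb with ⟨h1, h2⟩ | ⟨h1, h2⟩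
        · exact ⟨psi L hL0 (b+1), by
            rw [(hFb b hb).1 h1]; exact Finset.mem_insert_self _ _, h2,
            Or.inr (psivb1 b hb)⟩
        · exact ⟨psi L hL0 b, by
            rw [(hFb b hb).2 h2]; exact Finset.mem_insert_self _ _, h2,
            Or.inl (psivb b hb)⟩
      have hFmem : ∀ b ∈ B, ∀ a : Fin L, a ∈ (F b).1 → a ∉ A'.1 →
          ((a : ℕ) = b ∨ (a : ℕ) = b + 1) := by
        intro b hb a ha ha'
        rcases hxone b hb with ⟨h1, h2⟩ | ⟨h1, h2⟩
        · rw [(hFb b hb).1 h1] at ha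
          rcases Finset.mem_insert.mp ha with rfl | h3
          · exact Or.inr (psivb1 b hb)
          · exact absurd (Finset.mem_of_mem_erase h3) ha'
        · rw [(hFb b hb).2 h2] at ha
          rcases Finset.mem_insert.mp ha with rfl | h3
          · exact Or.inl (psivb b hb)
          · exact absurd (Finset.mem_of_mem_erase h3) ha'
      have hFinj : ∀ b ∈ B, ∀ c ∈ B, F b = F c → b = c := by
        intro b hb c hc h
        by_contra hbc
        obtain ⟨e, he1, he2, he3⟩ := hFnew b hb
        have h4 := hFmem c hc e (h ▸ he1) he2
        rcases hgap b hb c hc hbc with h5 | h5 <;> omega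
      have hFneA' : ∀ b ∈ B, F b ≠ A' := by
        intro b hb h
        obtain ⟨e, he1, he2, _⟩ := hFnew b hb
        rw [h] at he1
        exact he2 he1
      set N : Finset {A : Finset (Fin L) // A.card = M} := insert A' (B.image F) with hN
      have hnotin : A' ∉ B.image F := by
        intro h
        rcases Finset.mem_image.mp h with ⟨b, hb, hbeq⟩
        exact hFneA' b hb hbeq
      have h0 : ∀ A, A ∉ N → H A' A * X A = 0 := by
        intro A hAN
        by_cases hxA : xv L hL0 B A.1 = 0
        · simp [hXdef, hxA]
        have hAcard : A.1.card = B.card := by rw [A.2, hBcard]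
        have hsupp := supp_elts (hL := hL0) hB1 hgap hAcard hxA
        by_cases hmv : ∃ j k, j ∈ A.1 ∧ k ∉ A.1 ∧ A'.1 = insert k (A.1.erase j)
        · exfalso
          apply hAN
          obtain ⟨j, k, hj, hk, heq⟩ := hmv
          have hjA' : j ∉ A'.1 := mv_notmem_j hj hk heq
          have hkA' : k ∈ A'.1 := mv_mem_k hk heq
          obtain ⟨b, hb, hj2⟩ := hsupp j hj
          have hcb := chi_cases (chi_ne_zero (hL := hL0) hxA hb)
          rcases hj2 with rfl | rfl
          · have hnA : psi L hL0 (b+1) ∉ A.1 := by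
              rcases hcb with ⟨_, h2⟩ | ⟨_, h2⟩
              · exact h2
              · exact absurd hj h2
            have hbA' : psi L hL0 (b+1) ∈ A'.1 := by
              rcases hcase b hb with h1 | h1
              · exact absurd h1 hjA'
              · exact h1
            have hkk : psi L hL0 (b+1) = k := mv_unique_k hj hk heq hbA' hnA
            have hAeq : A.1 = insert (psi L hL0 b) (A'.1.erase (psi L hL0 (b+1))) := by
              rw [mv_symm hj hk heq, ← hkk]
            have hAF : A = F b := Subtype.ext (by rw [hAeq, (hFb b hb).2 hjA'])
            rw [hN]
            exact Finset.mem_insert_of_mem (Finset.mem_image.mpr ⟨b, hb, hAF.symm⟩)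
          · have hnA : psi L hL0 b ∉ A.1 := by
              rcases hcb with ⟨_, h2⟩ | ⟨_, h2⟩
              · exact absurd hj h2
              · exact h2
            have hbA' : psi L hL0 b ∈ A'.1 := by
              rcases hcase b hb with h1 | h1
              · exact h1
              · exact absurd h1 hjA'
            have hkk : psi L hL0 b = k := mv_unique_k hj hk heq hbA' hnA
            have hAeq : A.1 = insert (psi L hL0 (b+1)) (A'.1.erase (psi L hL0 b)) := by
              rw [mv_symm hj hk heq, ← hkk]
            have hAF : A = F b := Subtype.ext (by rw [hAeq, (hFb b hb).1 hbA'])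
            rw [hN]
            exact Finset.mem_insert_of_mem (Finset.mem_image.mpr ⟨b, hb, hAF.symm⟩)
        · have hne : A' ≠ A := by
            intro h
            apply hAN
            rw [hN, ← h]
            exact Finset.mem_insert_self _ _
          rw [hzero A A' hne hmv, zero_mul]
      have hterm : ∀ b ∈ B, H A' (F b) * X (F b) =
          (((if psi L hL0 b ∈ A'.1 then Gm else Gp) : ℝ) : ℂ) * X A' := by
        intro b hb
        have hb1 : b + 1 < L := hB1 b hb
        have hne : psi L hL0 b ≠ psi L hL0 (b+1) := psi_ne hL0 (by omega) hb1 (by omega)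
        rcases hxone b hb with ⟨h1, h2⟩ | ⟨h1, h2⟩
        · have hFb1 := (hFb b hb).1 h1
          have hjF : psi L hL0 (b+1) ∈ (F b).1 := by
            rw [hFb1]; exact Finset.mem_insert_self _ _
          have hkF : psi L hL0 b ∉ (F b).1 := by
            rw [hFb1]
            simp only [Finset.mem_insert, Finset.mem_erase]
            rintro (h | ⟨h3, _⟩)
            · exact hne h
            · exact h3 rfl
          have heq : A'.1 = insert (psi L hL0 b) ((F b).1.erase (psi L hL0 (b+1))) := by
            rw [hFb1, Finset.erase_insert (fun hh => h2 (Finset.mem_of_mem_erase hh)),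
              Finset.insert_erase h1]
          have hHval : H A' (F b) = ((-(G (psi L hL0 (b+1)) (psi L hL0 b)) : ℝ) : ℂ) :=
            hoff (F b) A' _ _ hjF hkF heq
          have hGval : G (psi L hL0 (b+1)) (psi L hL0 b) = Gm := by
            rw [hG]
            have c1 : ¬ (psi L hL0 (b+1) < psi L hL0 b) := by
              rw [Fin.lt_def, psivb b hb, psivb1 b hb]; omega
            have c2 : psi L hL0 b < psi L hL0 (b+1) := by
              rw [Fin.lt_def, psivb b hb, psivb1 b hb]; omega
            rw [if_neg c1, if_pos c2]
          have hXF : X (F b) = -(X A') := by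
            have hfl := xv_flip (hL := hL0) hB1 hgap hb (Or.inl ⟨rfl, rfl⟩) h1 h2
            simp only [hXdef]
            rw [hFb1, hfl]
            push_cast; ring
          rw [hHval, hGval, hXF, if_pos h1]
          push_cast; ring
        · have hFb1 := (hFb b hb).2 h2
          have hjF : psi L hL0 b ∈ (F b).1 := by
            rw [hFb1]; exact Finset.mem_insert_self _ _
          have hkF : psi L hL0 (b+1) ∉ (F b).1 := by
            rw [hFb1]
            simp only [Finset.mem_insert, Finset.mem_erase]
            rintro (h | ⟨h3, _⟩)
            · exact hne h.symm
            · exact h3 rfl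
          have heq : A'.1 = insert (psi L hL0 (b+1)) ((F b).1.erase (psi L hL0 b)) := by
            rw [hFb1, Finset.erase_insert (fun hh => h2 (Finset.mem_of_mem_erase hh)),
              Finset.insert_erase h1]
          have hHval : H A' (F b) = ((-(G (psi L hL0 b) (psi L hL0 (b+1))) : ℝ) : ℂ) :=
            hoff (F b) A' _ _ hjF hkF heq
          have hGval : G (psi L hL0 b) (psi L hL0 (b+1)) = Gp := by
            rw [hG]
            have c2 : psi L hL0 b < psi L hL0 (b+1) := by
              rw [Fin.lt_def, psivb b hb, psivb1 b hb]; omega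
            rw [if_pos c2]
          have hXF : X (F b) = -(X A') := by
            have hfl := xv_flip (hL := hL0) hB1 hgap hb (Or.inr ⟨rfl, rfl⟩) h1 h2
            simp only [hXdef]
            rw [hFb1, hfl]
            push_cast; ring
          rw [hHval, hGval, hXF, if_neg h2]
          push_cast; ring
      have hkey : 2 * ∑ j ∈ A'.1, ε j - M * (Gp + Gm) / 2 +
          (∑ b ∈ B, (if psi L hL0 b ∈ A'.1 then Gm else Gp)) = E := by
        have hsum3 : ∑ j ∈ A'.1, ε j = ∑ b ∈ B, ε (sel b) := by
          rw [← himg, Finset.sum_image (fun b hb c hc h => hinj hb hc h)]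
        have hconst : (M : ℝ) * (Gp + Gm) / 2 = ∑ b ∈ B, (Gp + Gm) / 2 := by
          rw [Finset.sum_const, ← hBcard, nsmul_eq_mul]
          ring
        rw [hE, hsum3, hconst, Finset.mul_sum, ← Finset.sum_sub_distrib,
          ← Finset.sum_add_distrib]
        apply Finset.sum_congr rfl
        intro b hb
        rcases hxone b hb with ⟨h1, h2⟩ | ⟨h1, h2⟩
        · have hs : sel b = psi L hL0 b := by simp [hseldef, h1]
          rw [hs, hε, psivb b hb, if_pos h1]
          have hGm : Gm = Gp + 2 * δ := by linarith
          rw [hGm]; ring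
        · have hs : sel b = psi L hL0 (b+1) := by simp [hseldef, h2]
          rw [hs, hε, psivb1 b hb, if_neg h2]
          have hGm : Gm = Gp + 2 * δ := by linarith
          rw [hGm]
          push_cast
          ring
      have hsum2 : ∑ b ∈ B, H A' (F b) * X (F b) =
          (((∑ b ∈ B, (if psi L hL0 b ∈ A'.1 then Gm else Gp)) : ℝ) : ℂ) * X A' := by
        rw [Finset.sum_congr rfl (fun b hb => hterm b hb), ← Finset.sum_mul]
        norm_cast
      rw [← Finset.sum_subset (Finset.subset_univ N) (fun A _ hA => h0 A hA)]
      rw [hN, Finset.sum_insert hnotin,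
        Finset.sum_image (fun b hb c hc h => hFinj b hb c hc h)]
      rw [hdiag A', hsum2, ← add_mul, ← Complex.ofReal_add, hkey]
    · -- Case 2 : some block disjoint from A'
      push_neg at hcase
      obtain ⟨bs, hbs, hlo, hhi⟩ := hcase
      have hb1s : bs + 1 < L := hB1 bs hbs
      -- flip map
      set F : {A : Finset (Fin L) // A.card = M} → {A : Finset (Fin L) // A.card = M} :=
        fun A => ⟨flipset L hL0 bs A.1, by rw [flipset_card]; exact A.2⟩ with hFdef
      have hinvol : ∀ A, F (F A) = A := by
        intro A; exact Subtype.ext (flipset_invol hb1s)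
      -- X A' = 0
      have hXA' : X A' = 0 := by
        have h0 : chi L hL0 bs A'.1 = 0 := by simp [chi, hlo, hhi]
        have hxv : xv L hL0 B A'.1 = 0 := Finset.prod_eq_zero hbs h0
        simp [hXdef, hxv]
      rw [hXA', mul_zero]
      -- H-invariance
      have Hinv : ∀ (A A₂ : {A : Finset (Fin L) // A.card = M}) (e e' : Fin L),
          ((e = psi L hL0 bs ∧ e' = psi L hL0 (bs+1)) ∨
            (e = psi L hL0 (bs+1) ∧ e' = psi L hL0 bs)) →
          e ∈ A.1 → e' ∉ A.1 → A₂.1 = insert e' (A.1.erase e) → H A' A₂ = H A' A := by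
        intro A A₂ e e' hee he he' hA₂
        have heA' : e ∉ A'.1 := by rcases hee with ⟨rfl, _⟩ | ⟨rfl, _⟩; exacts [hlo, hhi]
        have he'A' : e' ∉ A'.1 := by rcases hee with ⟨_, rfl⟩ | ⟨_, rfl⟩; exacts [hhi, hlo]
        have he'A₂ : e' ∈ A₂.1 := by rw [hA₂]; exact Finset.mem_insert_self _ _
        have heraseq : A₂.1.erase e' = A.1.erase e := by
          rw [hA₂, Finset.erase_insert (fun hh => he' (Finset.mem_of_mem_erase hh))]
        by_cases hmv : ∃ j k, j ∈ A.1 ∧ k ∉ A.1 ∧ A'.1 = insert k (A.1.erase j)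
        · obtain ⟨j, k, hj, hk, heq⟩ := hmv
          have hej : e = j := mv_unique_j hj hk heq he heA'
          rw [← hej] at heq hj
          have hkA' : k ∈ A'.1 := mv_mem_k hk heq
          have hke : k ≠ e := fun h => heA' (h ▸ hkA')
          have hke' : k ≠ e' := fun h => he'A' (h ▸ hkA')
          have H1 : H A' A = ((-(G e k) : ℝ) : ℂ) := hoff A A' e k he hk heq
          have hkA₂ : k ∉ A₂.1 := by
            rw [hA₂]
            simp only [Finset.mem_insert, Finset.mem_erase]
            rintro (rfl | ⟨_, hkk⟩)
            · exact hke' rfl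
            · exact hk hkk
          have heq₂ : A'.1 = insert k (A₂.1.erase e') := by rw [heraseq]; exact heq
          have H2 : H A' A₂ = ((-(G e' k) : ℝ) : ℂ) := hoff A₂ A' e' k he'A₂ hkA₂ heq₂
          rw [H1, H2]
          have hev : (e : ℕ) = bs ∨ (e : ℕ) = bs + 1 := by
            rcases hee with ⟨rfl, _⟩ | ⟨rfl, _⟩
            · exact Or.inl (psivb bs hbs)
            · exact Or.inr (psivb1 bs hbs)
          have he'v : (e' : ℕ) = bs ∨ (e' : ℕ) = bs + 1 := by
            rcases hee with ⟨_, rfl⟩ | ⟨_, rfl⟩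
            · exact Or.inr (psivb1 bs hbs)
            · exact Or.inl (psivb bs hbs)
          have hk2 : k ≠ psi L hL0 bs ∧ k ≠ psi L hL0 (bs+1) := by
            rcases hee with ⟨rfl, rfl⟩ | ⟨rfl, rfl⟩
            · exact ⟨hke, hke'⟩
            · exact ⟨hke', hke⟩
          have hkv1 : (k : ℕ) ≠ bs := fun h =>
            hk2.1 (Fin.ext (h.trans (psivb bs hbs).symm))
          have hkv2 : (k : ℕ) ≠ bs + 1 := fun h =>
            hk2.2 (Fin.ext (h.trans (psivb1 bs hbs).symm))
          rw [hG e k, hG e' k]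
          rcases (show (k : ℕ) < bs ∨ bs + 1 < (k : ℕ) by omega) with hlt | hlt
          · have c1 : ¬ (e < k) := by rw [Fin.lt_def]; omega
            have c2 : k < e := by rw [Fin.lt_def]; omega
            have c3 : ¬ (e' < k) := by rw [Fin.lt_def]; omega
            have c4 : k < e' := by rw [Fin.lt_def]; omega
            rw [if_neg c1, if_pos c2, if_neg c3, if_pos c4]
          · have c1 : e < k := by rw [Fin.lt_def]; omega
            have c3 : e' < k := by rw [Fin.lt_def]; omega
            rw [if_pos c1, if_pos c3]
        · have hmv₂ : ¬ ∃ j k, j ∈ A₂.1 ∧ k ∉ A₂.1 ∧ A'.1 = insert k (A₂.1.erase j) := by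
            rintro ⟨j, k, hj, hk, heq⟩
            have hej : e' = j := mv_unique_j hj hk heq he'A₂ he'A'
            rw [← hej] at heq hj
            have hkA' : k ∈ A'.1 := mv_mem_k hk heq
            have hkeq : A'.1 = insert k (A.1.erase e) := by rw [← heraseq]; exact heq
            have hkA : k ∉ A.1 := by
              intro hkA
              have hke2 : k = e := by
                by_contra hne2
                exact hk (by
                  rw [hA₂]
                  exact Finset.mem_insert_of_mem (Finset.mem_erase.mpr ⟨hne2, hkA⟩))
              exact heA' (hke2 ▸ hkA')
            exact hmv ⟨e, k, he, hkA, hkeq⟩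
          have hne1 : A' ≠ A := fun h => heA' (by rw [h]; exact he)
          have hne2 : A' ≠ A₂ := fun h => he'A' (by rw [h]; exact he'A₂)
          rw [hzero A A' hne1 hmv, hzero A₂ A' hne2 hmv₂]
      -- pointwise sign flip
      have hpt : ∀ A, H A' (F A) * X (F A) = -(H A' A * X A) := by
        intro A
        by_cases h1 : psi L hL0 bs ∈ A.1 <;> by_cases h2 : psi L hL0 (bs+1) ∈ A.1
        · have hFA : F A = A := Subtype.ext (flipset_id (iff_of_true h1 h2))
          have hchi : chi L hL0 bs A.1 = 0 := by simp [chi, h1, h2]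
          have hxv : xv L hL0 B A.1 = 0 := Finset.prod_eq_zero hbs hchi
          rw [hFA]
          simp [hXdef, hxv]
        · have hFA : (F A).1 = insert (psi L hL0 (bs+1)) (A.1.erase (psi L hL0 bs)) :=
            flipset_pos h1 h2
          have hH : H A' (F A) = H A' A := Hinv A (F A) _ _ (Or.inl ⟨rfl, rfl⟩) h1 h2 hFA
          have hXF : X (F A) = -(X A) := by
            have hfl := xv_flip (hL := hL0) hB1 hgap hbs (Or.inl ⟨rfl, rfl⟩) h1 h2
            simp only [hXdef]
            rw [hFA, hfl]
            push_cast
            ring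
          rw [hH, hXF]
          ring
        · have hFA : (F A).1 = insert (psi L hL0 bs) (A.1.erase (psi L hL0 (bs+1))) :=
            flipset_neg h2 h1
          have hH : H A' (F A) = H A' A := Hinv A (F A) _ _ (Or.inr ⟨rfl, rfl⟩) h2 h1 hFA
          have hXF : X (F A) = -(X A) := by
            have hfl := xv_flip (hL := hL0) hB1 hgap hbs (Or.inr ⟨rfl, rfl⟩) h2 h1
            simp only [hXdef]
            rw [hFA, hfl]
            push_cast
            ring
          rw [hH, hXF]
          ring
        · have hFA : F A = A := Subtype.ext (flipset_id (iff_of_false h1 h2))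
          have hchi : chi L hL0 bs A.1 = 0 := by simp [chi, h1, h2]
          have hxv : xv L hL0 B A.1 = 0 := Finset.prod_eq_zero hbs hchi
          rw [hFA]
          simp [hXdef, hxv]
      -- sum is zero
      have hsum : ∑ A, H A' A * X A = ∑ A, H A' (F A) * X (F A) := by
        exact (Equiv.sum_comp ⟨F, F, hinvol, hinvol⟩ (fun A => H A' A * X A)).symm
      have h1 : ∑ A, H A' A * X A = -∑ A, H A' A * X A := by
        calc ∑ A, H A' A * X A = ∑ A, H A' (F A) * X (F A) := hsum
          _ = ∑ A, -(H A' A * X A) := Finset.sum_congr rfl fun A _ => hpt A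
          _ = -∑ A, H A' A * X A := by rw [Finset.sum_neg_distrib]
      linear_combination h1 / 2

end BCSAux

/-- On the critical lines `G₊ - G₋ = ±2δ`, for every `M`-element subset `T` of
`S = {δ(k - L/2) : k = 1, ..., L-1}` whose distinct elements satisfy `|v - w| > δ`,
the number `E = 2∑_{v∈T} v` is an eigenvalue of the pair-sector BCS Hamiltonian
matrix `H` (indexed by `M`-element subsets of the `L` levels). -/
theorem stmt_4 (L M : ℕ) (hL : 2 ≤ L) (hM1 : 1 ≤ M) (hM2 : 2 * M ≤ L)
    (δ : ℝ) (hδ : 0 < δ) (Gp Gm : ℝ) (hGp : 0 < Gp) (hGm : 0 < Gm)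
    (hcrit : Gp - Gm = 2 * δ ∨ Gp - Gm = -(2 * δ))
    (ε : Fin L → ℝ) (hε : ∀ j, ε j = (((j : ℕ) : ℝ) + 1 - ((L : ℝ) + 1) / 2) * δ)
    (G : Fin L → Fin L → ℝ)
    (hG : ∀ j k, G j k = if j < k then Gp else if k < j then Gm else (Gp + Gm) / 2)
    (H : Matrix {A : Finset (Fin L) // A.card = M} {A : Finset (Fin L) // A.card = M} ℂ)
    (hdiag : ∀ A, H A A = ((2 * ∑ j ∈ A.1, ε j - M * (Gp + Gm) / 2 : ℝ) : ℂ))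
    (hoff : ∀ A A' (j k : Fin L), j ∈ A.1 → k ∉ A.1 → A'.1 = insert k (A.1.erase j) →
      H A' A = ((-(G j k) : ℝ) : ℂ))
    (hzero : ∀ A A', A' ≠ A →
      (¬ ∃ j k, j ∈ A.1 ∧ k ∉ A.1 ∧ A'.1 = insert k (A.1.erase j)) → H A' A = 0)
    (T : Finset ℝ) (hTcard : T.card = M)
    (hTS : ∀ v ∈ T, ∃ k ∈ Finset.Icc 1 (L - 1), v = δ * ((k : ℝ) - (L : ℝ) / 2))
    (hTgap : ∀ v ∈ T, ∀ w ∈ T, v ≠ w → δ < |v - w|) :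
    ∃ x : {A : Finset (Fin L) // A.card = M} → ℂ, x ≠ 0 ∧
      H.mulVec x = ((2 * ∑ v ∈ T, v : ℝ) : ℂ) • x := by
  classical
  have hL0 : 0 < L := by omega
  choose! k hk1 hk2 using hTS
  have hk1' : ∀ v ∈ T, 1 ≤ k v ∧ k v ≤ L - 1 := fun v hv => Finset.mem_Icc.mp (hk1 v hv)
  have hinj : Set.InjOn (fun v => k v - 1) T := by
    intro v hv w hw h
    have h1 := (hk1' v hv).1
    have h2 := (hk1' w hw).1
    have hkk : k v = k w := by simp only at h; omega
    rw [hk2 v hv, hk2 w hw, hkk]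
  set B : Finset ℕ := T.image (fun v => k v - 1) with hB
  have hBcard : B.card = M := by rw [hB, Finset.card_image_of_injOn hinj, hTcard]
  have hB1 : ∀ b ∈ B, b + 1 < L := by
    intro b hb
    rcases Finset.mem_image.mp hb with ⟨v, hv, rfl⟩
    have h1 := hk1' v hv
    omega
  have hgap : ∀ b ∈ B, ∀ c ∈ B, b ≠ c → b + 2 ≤ c ∨ c + 2 ≤ b := by
    intro b hb c hc hbc
    rcases Finset.mem_image.mp hb with ⟨v, hv, rfl⟩
    rcases Finset.mem_image.mp hc with ⟨w, hw, rfl⟩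
    have h1 := (hk1' v hv).1
    have h2 := (hk1' w hw).1
    have hkvw : k v ≠ k w := by omega
    have hvw : v ≠ w := fun h => hkvw (by rw [h])
    have hgap2 := hTgap v hv w hw hvw
    have hd : v - w = δ * ((k v : ℝ) - (k w : ℝ)) := by
      conv_lhs => rw [hk2 v hv, hk2 w hw]
      ring
    rw [hd, abs_mul, abs_of_pos hδ] at hgap2
    have h3 : 1 < |(k v : ℝ) - (k w : ℝ)| := by
      by_contra h
      push_neg at h
      nlinarith
    rcases abs_cases ((k v : ℝ) - (k w : ℝ)) with ⟨he, _⟩ | ⟨he, _⟩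
    · rw [he] at h3
      have h5 : k w + 1 < k v := by
        have h6 : ((k w + 1 : ℕ) : ℝ) < (k v : ℝ) := by push_cast; linarith
        exact_mod_cast h6
      omega
    · rw [he] at h3
      have h5 : k v + 1 < k w := by
        have h6 : ((k v + 1 : ℕ) : ℝ) < (k w : ℝ) := by push_cast; linarith
        exact_mod_cast h6
      omega
  have hEeq : (∑ b ∈ B, ((2 * (b : ℝ) + 2 - (L : ℝ)) * δ)) = 2 * ∑ v ∈ T, v := by
    rw [hB, Finset.sum_image (fun v hv w hw h => hinj hv hw h), Finset.mul_sum]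
    apply Finset.sum_congr rfl
    intro v hv
    have h1 := (hk1' v hv).1
    conv_rhs => rw [hk2 v hv]
    show (2 * ((k v - 1 : ℕ) : ℝ) + 2 - (L : ℝ)) * δ = 2 * (δ * ((k v : ℝ) - (L : ℝ) / 2))
    rw [Nat.cast_sub h1, Nat.cast_one]
    ring
  rcases hcrit with hc | hc
  · -- Gp - Gm = 2δ : use the transpose
    have hres := BCSAux.core L M hL0 δ Gm Gp (by linarith) ε hε (fun j k => G k j)
      (by
        intro j k
        show G k j = _
        rw [hG k j]
        rcases lt_trichotomy j k with h | h | h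
        · simp [h, asymm h]
        · subst h
          simp [lt_irrefl, add_comm]
        · simp [h, asymm h])
      Hᵀ
      (by
        intro A
        rw [Matrix.transpose_apply, hdiag A]
        congr 1
        ring)
      (by
        intro A A2 j k2 hj hk2 he
        rw [Matrix.transpose_apply]
        exact hoff A2 A k2 j (BCSAux.mv_mem_k hk2 he) (BCSAux.mv_notmem_j hj hk2 he)
          (BCSAux.mv_symm hj hk2 he))
      (by
        intro A A2 hne hnmv
        rw [Matrix.transpose_apply]
        apply hzero A2 A (Ne.symm hne)
        rintro ⟨j, k2, hj, hk2, he⟩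
        exact hnmv ⟨k2, j, BCSAux.mv_mem_k hk2 he, BCSAux.mv_notmem_j hj hk2 he,
          BCSAux.mv_symm hj hk2 he⟩)
      B hBcard hB1 hgap
    obtain ⟨y, hy0, hy⟩ := hres
    apply BCSAux.eig_of_transpose
    exact ⟨y, hy0, by rw [hy, hEeq]⟩
  · -- Gp - Gm = -2δ : direct
    obtain ⟨x, hx0, hx⟩ :=
      BCSAux.core L M hL0 δ Gp Gm hc ε hε G hG H hdiag hoff hzero B hBcard hB1 hgap
    exact ⟨x, hx0, by rw [hx, hEeq]⟩
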